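/- arXiv:0901.1742 — 7 statements merged into one kernel-verified Lean document; each statement's English description precedes it below -/
import Mathlib

section
/- Let f : A → B be a homomorphism of commutative rings and J an ideal of B. Then the map γ : A⋈^f J → (f(A)+J)/J sending (a, f(a)+j) to the class of f(a) modulo J is a surjective ring homomorphism with kernel f⁻¹(J) × J = {(a, j) : a ∈ A, f(a) ∈ J, j ∈ J}; hence (A⋈^f J)/(f⁻¹(J) × J) is isomorphic to (f(A)+J)/J, and if f is surjective it is isomorphic to B/J. -/
/-- The amalgamation `A ⋈^f J = {(a, f a + j) | a ∈ A, j ∈ J}` of `A` with `B`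
along the ideal `J` of `B`, with respect to the ring homomorphism `f : A → B`,
as a subring of the product ring `A × B`. -/
def amalgamation {A B : Type*} [CommRing A] [CommRing B] (f : A →+* B) (J : Ideal B) :
    Subring (A × B) where
  carrier := {x : A × B | ∃ a : A, ∃ j ∈ J, x = (a, f a + j)}
  one_mem' := ⟨1, 0, J.zero_mem, by simp; rfl⟩
  zero_mem' := ⟨0, 0, J.zero_mem, by simp; rfl⟩
  mul_mem' := by
    rintro x y ⟨a, j, hj, rfl⟩ ⟨c, k, hk, rfl⟩
    refine ⟨a * c, f a * k + j * f c + j * k,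
      J.add_mem (J.add_mem (J.mul_mem_left _ hk) (J.mul_mem_right _ hj)) (J.mul_mem_right _ hj),
      ?_⟩
    simp only [Prod.mk_mul_mk, map_mul, Prod.mk.injEq]
    exact ⟨trivial, by ring⟩
  add_mem' := by
    rintro x y ⟨a, j, hj, rfl⟩ ⟨c, k, hk, rfl⟩
    refine ⟨a + c, j + k, J.add_mem hj hk, ?_⟩
    simp only [Prod.mk_add_mk, map_add, Prod.mk.injEq]
    exact ⟨trivial, by ring⟩
  neg_mem' := by
    rintro x ⟨a, j, hj, rfl⟩
    refine ⟨-a, -j, J.neg_mem hj, ?_⟩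
    simp only [Prod.neg_mk, map_neg, Prod.mk.injEq]
    exact ⟨trivial, by ring⟩

/-- The subring `f(A) + J = {f a + j | a ∈ A, j ∈ J}` of `B`. -/
def imageAddIdeal {A B : Type*} [CommRing A] [CommRing B] (f : A →+* B) (J : Ideal B) :
    Subring B where
  carrier := {b : B | ∃ a : A, ∃ j ∈ J, b = f a + j}
  one_mem' := ⟨1, 0, J.zero_mem, by simp⟩
  zero_mem' := ⟨0, 0, J.zero_mem, by simp⟩
  mul_mem' := by
    rintro x y ⟨a, j, hj, rfl⟩ ⟨c, k, hk, rfl⟩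
    exact ⟨a * c, f a * k + j * f c + j * k,
      J.add_mem (J.add_mem (J.mul_mem_left _ hk) (J.mul_mem_right _ hj)) (J.mul_mem_right _ hj),
      by rw [map_mul]; ring⟩
  add_mem' := by
    rintro x y ⟨a, j, hj, rfl⟩ ⟨c, k, hk, rfl⟩
    exact ⟨a + c, j + k, J.add_mem hj hk, by rw [map_add]; ring⟩
  neg_mem' := by
    rintro x ⟨a, j, hj, rfl⟩
    exact ⟨-a, -j, J.neg_mem hj, by rw [map_neg]; ring⟩

/-- `J` regarded as an ideal of the subring `f(A) + J` of `B`. -/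
def idealInImage {A B : Type*} [CommRing A] [CommRing B] (f : A →+* B) (J : Ideal B) :
    Ideal ↥(imageAddIdeal f J) where
  carrier := {x : ↥(imageAddIdeal f J) | (x : B) ∈ J}
  zero_mem' := J.zero_mem
  add_mem' := fun hx hy => J.add_mem hx hy
  smul_mem' := fun c x hx => by
    show ((c * x : ↥(imageAddIdeal f J)) : B) ∈ J
    exact J.mul_mem_left (c : B) hx

/-- The second projection of the amalgamation, corestricted to `f(A) + J`. -/
def amalgProjB' {A B : Type*} [CommRing A] [CommRing B] (f : A →+* B) (J : Ideal B) :
    ↥(amalgamation f J) →+* ↥(imageAddIdeal f J) :=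
  RingHom.codRestrict ((RingHom.snd A B).comp (amalgamation f J).subtype) (imageAddIdeal f J)
    (fun x => by
      obtain ⟨a, j, hj, h⟩ := x.2
      exact ⟨a, j, hj, by show (x : A × B).2 = f a + j; rw [h]⟩)

/-- The natural homomorphism `γ : A ⋈^f J → (f(A)+J)/J`, `(a, f a + j) ↦ f a + J`. -/
def amalgGamma {A B : Type*} [CommRing A] [CommRing B] (f : A →+* B) (J : Ideal B) :
    ↥(amalgamation f J) →+* ↥(imageAddIdeal f J) ⧸ idealInImage f J :=
  (Ideal.Quotient.mk (idealInImage f J)).comp (amalgProjB' f J)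

theorem statement3 {A B : Type*} [CommRing A] [CommRing B] (f : A →+* B) (J : Ideal B) :
    (∀ x : amalgamation f J,
      amalgGamma f J x =
        Ideal.Quotient.mk (idealInImage f J)
          ⟨f (x : A × B).1, (x : A × B).1, 0, J.zero_mem, by simp⟩) ∧
    Function.Surjective (amalgGamma f J) ∧
    (∀ x : amalgamation f J,
      x ∈ RingHom.ker (amalgGamma f J) ↔ f (x : A × B).1 ∈ J ∧ (x : A × B).2 ∈ J) ∧
    Nonempty ((↥(amalgamation f J) ⧸ RingHom.ker (amalgGamma f J)) ≃+*
      (↥(imageAddIdeal f J) ⧸ idealInImage f J)) ∧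
    (Function.Surjective f →
      Nonempty ((↥(amalgamation f J) ⧸ RingHom.ker (amalgGamma f J)) ≃+* (B ⧸ J))) := by
  have hsnd : ∀ x : amalgamation f J, ((amalgProjB' f J x : ↥(imageAddIdeal f J)) : B)
      = (x : A × B).2 := fun x => rfl
  have h1 : ∀ x : amalgamation f J,
      amalgGamma f J x =
        Ideal.Quotient.mk (idealInImage f J)
          ⟨f (x : A × B).1, (x : A × B).1, 0, J.zero_mem, by simp⟩ := by
    intro x
    obtain ⟨a, j, hj, hx⟩ := x.2
    show Ideal.Quotient.mk (idealInImage f J) (amalgProjB' f J x) = _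
    rw [Ideal.Quotient.eq]
    show ((amalgProjB' f J x : B) - f (x : A × B).1) ∈ J
    rw [hsnd, hx]
    simpa using hj
  have hker : ∀ x : amalgamation f J,
      x ∈ RingHom.ker (amalgGamma f J) ↔ f (x : A × B).1 ∈ J ∧ (x : A × B).2 ∈ J := by
    intro x
    obtain ⟨a, j, hj, hx⟩ := x.2
    have h2 : (x : A × B).2 = f (x : A × B).1 + j := by rw [hx]
    constructor
    · intro h
      rw [RingHom.mem_ker] at h
      have : ((amalgProjB' f J x : ↥(imageAddIdeal f J))) ∈ idealInImage f J := by
        rwa [← Ideal.Quotient.eq_zero_iff_mem]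
      have hx2 : (x : A × B).2 ∈ J := this
      have hfx : f (x : A × B).1 ∈ J := by
        have := J.sub_mem hx2 hj
        rwa [h2, add_sub_cancel_right] at this
      exact ⟨hfx, hx2⟩
    · intro ⟨_, hx2⟩
      rw [RingHom.mem_ker]
      show Ideal.Quotient.mk (idealInImage f J) (amalgProjB' f J x) = 0
      rw [Ideal.Quotient.eq_zero_iff_mem]
      exact hx2
  have hsurj : Function.Surjective (amalgGamma f J) := by
    intro y
    obtain ⟨b, rfl⟩ := Ideal.Quotient.mk_surjective y
    obtain ⟨a, j, hj, hb⟩ := b.2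
    refine ⟨⟨(a, f a + j), a, j, hj, rfl⟩, ?_⟩
    show Ideal.Quotient.mk (idealInImage f J) _ = _
    rw [Ideal.Quotient.eq]
    show ((f a + j) - (b : B)) ∈ J
    rw [hb]; simp
  refine ⟨h1, hsurj, hker, ⟨RingHom.quotientKerEquivOfSurjective hsurj⟩, ?_⟩
  intro hf
  set g : ↥(amalgamation f J) →+* B ⧸ J :=
    (Ideal.Quotient.mk J).comp ((RingHom.snd A B).comp (amalgamation f J).subtype) with hg
  have hgker : RingHom.ker (amalgGamma f J) = RingHom.ker g := by
    ext x
    rw [hker x, RingHom.mem_ker]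
    obtain ⟨a, j, hj, hx⟩ := x.2
    have h2 : (x : A × B).2 = f (x : A × B).1 + j := by rw [hx]
    have : g x = Ideal.Quotient.mk J (x : A × B).2 := rfl
    rw [this, Ideal.Quotient.eq_zero_iff_mem]
    constructor
    · exact fun h => h.2
    · intro hx2
      refine ⟨?_, hx2⟩
      have := J.sub_mem hx2 hj
      rwa [h2, add_sub_cancel_right] at this
  have hgsurj : Function.Surjective g := by
    intro y
    obtain ⟨b, rfl⟩ := Ideal.Quotient.mk_surjective y
    obtain ⟨a, ha⟩ := hf b
    exact ⟨⟨(a, b), a, 0, J.zero_mem, by simp [ha]⟩, rfl⟩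
  exact ⟨(Ideal.quotEquivOfEq hgker).trans (RingHom.quotientKerEquivOfSurjective hgsurj)⟩
end

section
/- Let f : A → B be a homomorphism of commutative rings and J a nonzero ideal of B. Then A⋈^f J is an integral domain if and only if the subring f(A)+J of B is an integral domain and f⁻¹(J) = {0}. In particular, if B is an integral domain and f⁻¹(J) = {0}, then A⋈^f J is an integral domain. -/
section Aux

variable {A B : Type*} [CommRing A] [CommRing B] (f : A →+* B) (J : Ideal B)

/-- The second-projection map from the amalgamation into `f(A) + J`. -/
def amalgSnd : amalgamation f J →+* imageAddIdeal f J :=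
  RingHom.codRestrict ((RingHom.snd A B).comp (amalgamation f J).subtype) _ (by
    rintro ⟨x, a, j, hj, rfl⟩; exact ⟨a, j, hj, rfl⟩)

lemma amalgSnd_surjective : Function.Surjective (amalgSnd f J) := by
  rintro ⟨b, a, j, hj, rfl⟩
  exact ⟨⟨(a, f a + j), a, j, hj, rfl⟩, rfl⟩

set_option synthInstance.maxHeartbeats 400000 in
lemma amalgSnd_injective (h : Ideal.comap f J = ⊥) :
    Function.Injective (amalgSnd f J) := by
  rw [injective_iff_map_eq_zero]
  rintro ⟨x, a, j, hj, rfl⟩ hx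
  have hb : f a + j = 0 := congrArg Subtype.val hx
  have haJ : a ∈ Ideal.comap f J := by
    have : f a = -j := by linear_combination hb
    simpa [Ideal.mem_comap, this] using J.neg_mem hj
  rw [h, Ideal.mem_bot] at haJ
  subst haJ
  have hj0 : j = 0 := by simpa using hb
  subst hj0
  simp [Subtype.ext_iff, Prod.ext_iff]

end Aux

theorem statement4 {A B : Type*} [CommRing A] [CommRing B] (f : A →+* B) (J : Ideal B)
    (hJ : J ≠ ⊥) :
    (IsDomain ↥(amalgamation f J) ↔ IsDomain ↥(imageAddIdeal f J) ∧ Ideal.comap f J = ⊥) ∧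
    (IsDomain B → Ideal.comap f J = ⊥ → IsDomain ↥(amalgamation f J)) := by
  constructor
  · constructor
    · intro hdom
      have hcomap : Ideal.comap f J = ⊥ := by
        obtain ⟨j0, hj0J, hj0⟩ := Submodule.exists_mem_ne_zero_of_ne_bot hJ
        rw [eq_bot_iff]
        intro a haJ
        have hx : ((a, 0) : A × B) ∈ amalgamation f J :=
          ⟨a, -f a, J.neg_mem haJ, by simp⟩
        have hy : ((0, j0) : A × B) ∈ amalgamation f J :=
          ⟨0, j0, hj0J, by simp⟩
        have hmul : (⟨(a, 0), hx⟩ : amalgamation f J) * ⟨(0, j0), hy⟩ = 0 := by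
          ext <;> simp
        rcases mul_eq_zero.mp hmul with h | h
        · simpa [Subtype.ext_iff, Prod.ext_iff] using h
        · exact absurd (congrArg Prod.snd (congrArg Subtype.val h)) hj0
      refine ⟨?_, hcomap⟩
      have hbij : Function.Bijective (amalgSnd f J) :=
        ⟨amalgSnd_injective f J hcomap, amalgSnd_surjective f J⟩
      let e := RingEquiv.ofBijective _ hbij
      exact e.symm.injective.isDomain e.symm.toRingHom
    · rintro ⟨hdom, hcomap⟩
      exact (amalgSnd_injective f J hcomap).isDomain (amalgSnd f J)
  · intro hB hcomap
    have : IsDomain ↥(imageAddIdeal f J) := Subring.instIsDomainSubtypeMem _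
    exact (amalgSnd_injective f J hcomap).isDomain (amalgSnd f J)
end

section
/- Let f : A → B be a homomorphism of commutative rings and J an ideal of B. Then the ring A⋈^f J is reduced if and only if A is reduced and Nilp(B) ∩ J = {0}, where Nilp(B) is the set of nilpotent elements of B. In particular, if A and B are both reduced then A⋈^f J is reduced. -/
lemma amal_nilp {A B : Type*} [CommRing A] [CommRing B] (f : A →+* B) (J : Ideal B)
    (x : ↥(amalgamation f J)) :
    IsNilpotent x ↔ IsNilpotent (x : A × B).1 ∧ IsNilpotent (x : A × B).2 := by
  constructor
  · rintro ⟨n, hn⟩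
    have h : ((x : A × B)) ^ n = 0 := by
      have := congrArg (Subtype.val) hn
      simpa using this
    rw [Prod.pow_def] at h
    exact ⟨⟨n, congrArg Prod.fst h⟩, ⟨n, congrArg Prod.snd h⟩⟩
  · rintro ⟨⟨n, hn⟩, ⟨m, hm⟩⟩
    refine ⟨n + m, ?_⟩
    apply Subtype.ext
    show ((x : A × B)) ^ (n + m) = 0
    rw [Prod.pow_def]
    ext
    · simp [pow_add, hn]
    · simp [pow_add, hm]

theorem statement5 {A B : Type*} [CommRing A] [CommRing B] (f : A →+* B) (J : Ideal B) :
    (IsReduced ↥(amalgamation f J) ↔ IsReduced A ∧ nilradical B ⊓ J = ⊥) ∧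
    (IsReduced A → IsReduced B → IsReduced ↥(amalgamation f J)) := by
  have main : IsReduced ↥(amalgamation f J) ↔ IsReduced A ∧ nilradical B ⊓ J = ⊥ := by
    constructor
    · intro h
      constructor
      · refine ⟨fun a ha => ?_⟩
        set x : ↥(amalgamation f J) := ⟨(a, f a), a, 0, J.zero_mem, by simp⟩
        have hx : IsNilpotent x := by
          rw [amal_nilp]
          exact ⟨ha, ha.map f⟩
        have h0 : ((x : A × B)) = 0 := congrArg Subtype.val (h.eq_zero x hx)
        simpa [x] using (Prod.ext_iff.mp h0).1
      · refine le_antisymm ?_ bot_le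
        rintro b ⟨hb1, hb2⟩
        set x : ↥(amalgamation f J) := ⟨(0, b), 0, b, hb2, by simp⟩
        have hx : IsNilpotent x := by
          rw [amal_nilp]
          exact ⟨IsNilpotent.zero, mem_nilradical.mp hb1⟩
        have h0 : ((x : A × B)) = 0 := congrArg Subtype.val (h.eq_zero x hx)
        simpa [x] using (Prod.ext_iff.mp h0).2
    · rintro ⟨hA, hJ⟩
      refine ⟨fun x hx => ?_⟩
      obtain ⟨a, j, hj, hxval⟩ := x.2
      rw [amal_nilp] at hx
      have ha : a = 0 := by
        have : IsNilpotent a := by rw [hxval] at hx; exact hx.1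
        exact hA.eq_zero a this
      subst ha
      have hjnil : IsNilpotent j := by
        rw [hxval] at hx
        simpa using hx.2
      have : j ∈ nilradical B ⊓ J := ⟨mem_nilradical.mpr hjnil, hj⟩
      rw [hJ] at this
      have hj0 : j = 0 := this
      apply Subtype.ext
      rw [hxval, hj0]
      simp
  refine ⟨main, fun hA hB => main.mpr ⟨hA, ?_⟩⟩
  have : nilradical B = ⊥ := nilradical_eq_zero B
  rw [this]
  exact bot_inf_eq J
end

section
/- Let f : A → B be a homomorphism of commutative rings and J an ideal of B. Then the ring A⋈^f J is Noetherian if and only if both A and the subring f(A)+J of B are Noetherian rings. -/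
theorem statement7 {A B : Type*} [CommRing A] [CommRing B] (f : A →+* B) (J : Ideal B) :
    IsNoetherianRing ↥(amalgamation f J) ↔
      IsNoetherianRing A ∧ IsNoetherianRing ↥(imageAddIdeal f J) := by
  -- first projection onto `A`
  let π₁ : ↥(amalgamation f J) →+* A := (RingHom.fst A B).comp (amalgamation f J).subtype
  have h1 : Function.Surjective π₁ := fun a => ⟨⟨(a, f a), a, 0, J.zero_mem, by simp⟩, rfl⟩
  -- second projection onto `f(A) + J`
  have hmem : ∀ x : ↥(amalgamation f J),
      ((RingHom.snd A B).comp (amalgamation f J).subtype) x ∈ imageAddIdeal f J := by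
    rintro ⟨x, a, j, hj, rfl⟩; exact ⟨a, j, hj, rfl⟩
  let π₂ : ↥(amalgamation f J) →+* ↥(imageAddIdeal f J) :=
    RingHom.codRestrict ((RingHom.snd A B).comp (amalgamation f J).subtype) _ hmem
  have h2 : Function.Surjective π₂ := by
    rintro ⟨s, a, j, hj, rfl⟩
    exact ⟨⟨(a, f a + j), a, j, hj, rfl⟩, rfl⟩
  constructor
  · intro h
    exact ⟨isNoetherianRing_of_surjective _ _ π₁ h1, isNoetherianRing_of_surjective _ _ π₂ h2⟩
  · rintro ⟨hA, hS⟩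
    refine isNoetherian_mk ?_
    haveI hwA : WellFoundedGT (Ideal A) := hA.wellFoundedGT
    haveI hwS : WellFoundedGT (Ideal ↥(imageAddIdeal f J)) := hS.wellFoundedGT
    set K := RingHom.ker π₁ with hK
    -- key: the pair of maps reflects equality on comparable ideals
    have key : ∀ P Q : Ideal ↥(amalgamation f J), P ≤ Q →
        Ideal.map π₁ P = Ideal.map π₁ Q → Ideal.map π₂ (P ⊓ K) = Ideal.map π₂ (Q ⊓ K) →
        Q ≤ P := by
      intro P Q hle e1 e2 q hq
      have hq1 : π₁ q ∈ Ideal.map π₁ P := e1 ▸ Ideal.mem_map_of_mem π₁ hq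
      obtain ⟨p, hp, hpq⟩ := (Ideal.mem_map_iff_of_surjective π₁ h1).mp hq1
      have hsub : q - p ∈ Q ⊓ K := by
        refine ⟨Q.sub_mem hq (hle hp), ?_⟩
        show q - p ∈ RingHom.ker π₁
        rw [RingHom.mem_ker, RingHom.map_sub, hpq, sub_self]
      have hq2 : π₂ (q - p) ∈ Ideal.map π₂ (P ⊓ K) :=
        e2 ▸ Ideal.mem_map_of_mem π₂ hsub
      obtain ⟨x, hx, hx2⟩ := (Ideal.mem_map_iff_of_surjective π₂ h2).mp hq2
      have hxP : x ∈ P := hx.1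
      have hxK : x ∈ K := hx.2
      have hq_eq : q = p + x := by
        have c1 : (x : A × B).1 = 0 := by
          have : π₁ x = 0 := hxK
          exact this
        have c2 : (x : A × B).2 = (q : A × B).2 - (p : A × B).2 := by
          have := congrArg Subtype.val hx2
          exact this
        have e1' : (p : A × B).1 = (q : A × B).1 := hpq
        apply Subtype.ext
        apply Prod.ext
        · show (q : A × B).1 = (p : A × B).1 + (x : A × B).1
          rw [c1, e1', add_zero]
        · show (q : A × B).2 = (p : A × B).2 + (x : A × B).2
          rw [c2]; ring
      rw [hq_eq]
      exact P.add_mem hp hxP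
    have hF : StrictMono (fun P : Ideal ↥(amalgamation f J) =>
        (Ideal.map π₁ P, Ideal.map π₂ (P ⊓ K))) := by
      intro P Q hPQ
      have hle₁ : Ideal.map π₁ P ≤ Ideal.map π₁ Q := Ideal.map_mono hPQ.le
      have hle₂ : Ideal.map π₂ (P ⊓ K) ≤ Ideal.map π₂ (Q ⊓ K) :=
        Ideal.map_mono (inf_le_inf_right K hPQ.le)
      refine lt_of_le_of_ne ⟨hle₁, hle₂⟩ ?_
      intro h
      have e1 : Ideal.map π₁ P = Ideal.map π₁ Q := congrArg Prod.fst h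
      have e2 : Ideal.map π₂ (P ⊓ K) = Ideal.map π₂ (Q ⊓ K) := congrArg Prod.snd h
      exact hPQ.ne (le_antisymm hPQ.le (key P Q hPQ.le e1 e2))
    exact hF.wellFoundedGT
end

section
/- Let f : A → B be a homomorphism of commutative rings and J an ideal of B, and regard J as an A-module via the action a·j := f(a)j. If J is finitely generated as an A-module, then A⋈^f J is a Noetherian ring if and only if A is a Noetherian ring. -/
section
variable {A B : Type*} [CommRing A] [CommRing B] (f : A →+* B) (J : Ideal B)

/-- The diagonal ring hom `A → A ⋈^f J`. -/
def amalgDiag : A →+* amalgamation f J where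
  toFun a := ⟨(a, f a), a, 0, J.zero_mem, by simp⟩
  map_one' := by ext <;> simp
  map_mul' x y := by ext <;> simp
  map_zero' := by ext <;> simp
  map_add' x y := by ext <;> simp

end

theorem statement8 {A B : Type*} [CommRing A] [CommRing B] (f : A →+* B) (J : Ideal B) :
    letI : Algebra A B := f.toAlgebra
    (Submodule.restrictScalars A J).FG →
      (IsNoetherianRing ↥(amalgamation f J) ↔ IsNoetherianRing A) := by
  letI : Algebra A B := f.toAlgebra
  intro hfg
  constructor
  · intro h
    refine isNoetherianRing_of_surjective _ _ ((RingHom.fst A B).comp (amalgamation f J).subtype)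
      (fun a => ⟨⟨(a, f a), a, 0, J.zero_mem, by simp⟩, rfl⟩)
  · intro h
    letI : Algebra A ↥(amalgamation f J) := (amalgDiag f J).toAlgebra
    set N := Submodule.restrictScalars A J with hN
    haveI : IsNoetherian A ↥N := isNoetherian_of_fg_of_noetherian _ hfg
    let L : (A × ↥N) →ₗ[A] ↥(amalgamation f J) :=
      { toFun := fun p => ⟨(p.1, f p.1 + p.2.1), p.1, p.2.1, p.2.2, rfl⟩
        map_add' := fun p q => by
          ext
          · rfl
          · show f (p.1 + q.1) + (p.2.1 + q.2.1) = (f p.1 + p.2.1) + (f q.1 + q.2.1)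
            simp [map_add]; ring
        map_smul' := fun a p => by
          ext
          · rfl
          · show f (a * p.1) + (f a * p.2.1) = f a * (f p.1 + p.2.1)
            simp [map_mul]; ring }
    have hsurj : Function.Surjective L := by
      rintro ⟨x, a, j, hj, rfl⟩
      exact ⟨(a, ⟨j, hj⟩), rfl⟩
    haveI : IsNoetherian A ↥(amalgamation f J) := isNoetherian_of_surjective L
      (LinearMap.range_eq_top.mpr hsurj)
    exact isNoetherian_of_tower A this
end

section
/- Let f : A → B be a homomorphism of commutative rings and J an ideal of B. Suppose B is a Noetherian ring and the induced ring homomorphism f̆ : A → B/J (the composition of f with the canonical projection π : B → B/J) is finite, i.e., B/J is finitely generated as an A-module via f̆. Then A⋈^f J is a Noetherian ring if and only if A is a Noetherian ring. -/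
theorem aux_L1 {R M : Type*} [CommRing R] [AddCommGroup M] [Module R M]
    (h1 : ∀ P : Submodule R M, P ≠ ⊥ →
      ∃ Q : Submodule R M, Q ≤ P ∧ Q.FG ∧ IsNoetherian R (M ⧸ Q)) :
    IsNoetherian R M := by
  rw [isNoetherian_def]
  intro P
  by_cases hP : P = ⊥
  · simpa [hP] using Submodule.fg_bot
  · obtain ⟨Q, hQP, hQfg, hNoeth⟩ := h1 P hP
    apply Submodule.fg_of_fg_map_of_fg_inf_ker Q.mkQ
    · exact IsNoetherian.noetherian _
    · rwa [Submodule.ker_mkQ, inf_eq_right.2 hQP]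

theorem aux_L2 {R M : Type*} [CommRing R] [AddCommGroup M] [Module R M]
    (I : Ideal R) (hI : IsNoetherian R (R ⧸ I)) (hfg : (⊤ : Submodule R M).FG)
    (hann : ∀ r ∈ I, ∀ m : M, r • m = 0) : IsNoetherian R M := by
  classical
  obtain ⟨s, hs⟩ := hfg
  have hker : ∀ m : M, I ≤ LinearMap.ker (LinearMap.toSpanSingleton R M m) := by
    intro m r hr
    simpa [LinearMap.mem_ker] using hann r hr m
  let ψ : ({x // x ∈ s} → R ⧸ I) →ₗ[R] M :=
    ∑ i : {x // x ∈ s}, (I.liftQ (LinearMap.toSpanSingleton R M i) (hker i)) ∘ₗ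
      (LinearMap.proj i)
  have hsurj : LinearMap.range ψ = ⊤ := by
    rw [eq_top_iff, ← hs, Submodule.span_le]
    intro m hm
    refine ⟨Pi.single ⟨m, hm⟩ (Ideal.Quotient.mk I 1), ?_⟩
    simp only [ψ, LinearMap.sum_apply, LinearMap.comp_apply, LinearMap.proj_apply]
    rw [Finset.sum_eq_single (⟨m, hm⟩ : {x // x ∈ s})]
    · rw [Pi.single_eq_same]; erw [Submodule.liftQ_apply]; simp
    · intro b _ hb
      rw [Pi.single_eq_of_ne hb]
      simp
    · simp
  exact isNoetherian_of_surjective ψ hsurj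

/-- The Eakin–Nagata theorem. -/
theorem aux_eakin {R S : Type*} [CommRing R] [CommRing S] [Algebra R S]
    (hinj : Function.Injective (algebraMap R S)) [Module.Finite R S]
    (hS : IsNoetherianRing S) : IsNoetherianRing R := by
  classical
  suffices h : IsNoetherian R S by
    rw [isNoetherianRing_iff]
    exact isNoetherian_of_injective (Algebra.linearMap R S) hinj
  by_contra hnot
  set T : Set (Ideal S) := {J | (∃ I : Ideal R, I.map (algebraMap R S) = J) ∧
      ¬ IsNoetherian R (S ⧸ J)} with hT
  have hbot : (⊥ : Ideal S) ∈ T := by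
    refine ⟨⟨⊥, Ideal.map_bot⟩, fun h => hnot ?_⟩
    have hinj' : Function.Injective (Ideal.Quotient.mkₐ R (⊥ : Ideal S)) := by
      intro a b hab
      have h2 : Ideal.Quotient.mk (⊥ : Ideal S) a = Ideal.Quotient.mk ⊥ b := hab
      have h3 : a - b ∈ (⊥ : Ideal S) := Ideal.Quotient.eq.mp h2
      rw [Submodule.mem_bot, sub_eq_zero] at h3
      exact h3
    exact isNoetherian_of_injective (Ideal.Quotient.mkₐ R (⊥ : Ideal S)).toLinearMap hinj'
  obtain ⟨J₀, hJ₀, hmax⟩ := (set_has_maximal_iff_noetherian.mpr hS) T ⟨⊥, hbot⟩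
  obtain ⟨⟨I₀, hI₀⟩, hJ₀N⟩ := hJ₀
  -- Work in S' = S ⧸ J₀
  set S' := S ⧸ J₀ with hS'
  set g : R →+* S' := algebraMap R S' with hg
  have hgmk : ∀ r : R, g r = Ideal.Quotient.mk J₀ (algebraMap R S r) := fun r => rfl
  have hfin' : Module.Finite R S' :=
    Module.Finite.of_surjective (Ideal.Quotient.mkₐ R J₀).toLinearMap
      Ideal.Quotient.mk_surjective
  have hsmul : ∀ (r : R) (m : S'), r • m = g r * m := fun r m => Algebra.smul_def r m
  -- key maximality consequence
  have key : ∀ r : R, g r ≠ 0 →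
      IsNoetherian R (S' ⧸ ((Ideal.span {g r}).restrictScalars R)) := by
    intro r hr
    set K : Ideal S := (Ideal.span {r} : Ideal R).map (algebraMap R S) with hK
    have hKJ : ¬ K ≤ J₀ := by
      intro hle
      apply hr
      have h1 : algebraMap R S r ∈ K :=
        Ideal.mem_map_of_mem _ (Ideal.mem_span_singleton_self r)
      rw [hgmk, Ideal.Quotient.eq_zero_iff_mem]
      exact hle h1
    have hlt : J₀ < J₀ ⊔ K := left_lt_sup.mpr hKJ
    have hmem : IsNoetherian R (S ⧸ (J₀ ⊔ K)) := by
      by_contra hn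
      exact hmax (J₀ ⊔ K) ⟨⟨I₀ ⊔ Ideal.span {r}, by rw [Ideal.map_sup, hI₀]⟩, hn⟩ hlt
    have e1 := (DoubleQuot.quotQuotEquivQuotSupₐ R J₀ K).symm.toLinearEquiv
    have hmem2 : IsNoetherian R ((S ⧸ J₀) ⧸ K.map (Ideal.Quotient.mkₐ R J₀)) :=
      isNoetherian_of_linearEquiv e1
    have heq : K.map (Ideal.Quotient.mkₐ R J₀) = Ideal.span {g r} := by
      rw [hK, Ideal.map_span, Set.image_singleton, Ideal.map_span, Set.image_singleton]
      rfl
    rw [heq] at hmem2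
    exact isNoetherian_of_linearEquiv
      (Submodule.Quotient.restrictScalarsEquiv R (Ideal.span {g r})).symm
  -- Zorn's lemma
  obtain ⟨t, ht⟩ := hfin'.fg_top
  set Γ : Set (Submodule R S') := {N | ∀ r : R, (∀ m : S', r • m ∈ N) → g r = 0} with hΓ
  have hbotΓ : (⊥ : Submodule R S') ∈ Γ := by
    intro r hr
    have h1 := hr 1
    rw [Submodule.mem_bot] at h1
    rw [hsmul, mul_one] at h1
    exact h1
  have hzorn : ∃ N, (⊥ : Submodule R S') ≤ N ∧ Maximal (· ∈ Γ) N := by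
    apply zorn_le_nonempty₀ Γ _ ⊥ hbotΓ
    intro c hcΓ hchain y hy
    refine ⟨sSup c, ?_, fun z hz => le_sSup hz⟩
    intro r hr
    have hcomm : ∀ t' : Finset S', ∃ N ∈ c, ∀ m ∈ t', r • m ∈ N := by
      intro t'
      induction t' using Finset.induction with
      | empty => exact ⟨y, hy, by simp⟩
      | @insert a u ha ih =>
        obtain ⟨N, hNc, hNall⟩ := ih
        obtain ⟨N', hN'c, hmN'⟩ :=
          (Submodule.mem_sSup_of_directed ⟨y, hy⟩ hchain.directedOn).mp (hr a)
        rcases hchain.total hNc hN'c with hle | hle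
        · exact ⟨N', hN'c, fun m hm => by
            rcases Finset.mem_insert.mp hm with rfl | hm
            · exact hmN'
            · exact hle (hNall m hm)⟩
        · exact ⟨N, hNc, fun m hm => by
            rcases Finset.mem_insert.mp hm with rfl | hm
            · exact hle hmN'
            · exact hNall m hm⟩
    obtain ⟨N, hNc, hall⟩ := hcomm t
    have hN : ∀ m : S', r • m ∈ N := by
      intro m
      have hsub : Submodule.span R (t : Set S') ≤
          Submodule.comap ((LinearMap.lsmul R S') r) N := by
        rw [Submodule.span_le]
        intro x hx
        exact hall x hx
      rw [ht] at hsub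
      exact hsub (Submodule.mem_top : m ∈ ⊤)
    exact hcΓ hNc r hN
  obtain ⟨Nstar, -, hNmax⟩ := hzorn
  set M'' := S' ⧸ Nstar with hM''
  have hfinM : Module.Finite R M'' :=
    Module.Finite.of_surjective Nstar.mkQ (Submodule.mkQ_surjective Nstar)
  -- M'' is Noetherian via aux_L1
  have hMnoeth : IsNoetherian R M'' := by
    apply aux_L1
    intro P hP
    set N' : Submodule R S' := Submodule.comap Nstar.mkQ P with hN'
    have hle : Nstar ≤ N' := by
      intro x hx
      rw [hN', Submodule.mem_comap, Submodule.mkQ_apply,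
        (Submodule.Quotient.mk_eq_zero Nstar).mpr hx]
      exact P.zero_mem
    have hne : Nstar ≠ N' := by
      intro hEq
      apply hP
      have : P = Submodule.map Nstar.mkQ N' :=
        (Submodule.map_comap_eq_of_surjective (Submodule.mkQ_surjective Nstar) P).symm
      rw [this, ← hEq]
      ext x
      simp only [Submodule.mem_map, Submodule.mem_bot]
      constructor
      · rintro ⟨n, hn, rfl⟩
        simpa [Submodule.Quotient.mk_eq_zero] using hn
      · rintro rfl
        exact ⟨0, Nstar.zero_mem, by simp⟩
    have hN'Γ : N' ∉ Γ := by
      intro hmem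
      exact hne (le_antisymm hle (hNmax.2 hmem hle))
    have hN'Γ' : ¬ (∀ r : R, (∀ m : S', r • m ∈ N') → g r = 0) := hN'Γ
    push_neg at hN'Γ'
    obtain ⟨r, hrall, hr0⟩ := hN'Γ'
    refine ⟨Submodule.map ((LinearMap.lsmul R M'') r) ⊤, ?_, ?_, ?_⟩
    · rintro x ⟨m, -, rfl⟩
      obtain ⟨m', rfl⟩ := Submodule.mkQ_surjective Nstar m
      have : r • m' ∈ N' := hrall m'
      simpa using (Submodule.mem_comap.mp this)
    · exact Submodule.FG.map _ hfinM.fg_top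
    · -- transfer Noetherianity from S' ⧸ (span {g r})
      have hkey := key r hr0
      set Qs : Submodule R S' := (Ideal.span {g r}).restrictScalars R with hQs
      set Q : Submodule R M'' := Submodule.map ((LinearMap.lsmul R M'') r) ⊤ with hQ
      have hcond : Qs ≤ Submodule.comap Nstar.mkQ Q := by
        intro x hx
        rw [hQs, Submodule.restrictScalars_mem, Ideal.mem_span_singleton'] at hx
        obtain ⟨a, rfl⟩ := hx
        rw [Submodule.mem_comap]
        refine ⟨Nstar.mkQ a, Submodule.mem_top, ?_⟩
        show r • (Nstar.mkQ a) = Nstar.mkQ (a * g r)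
        rw [← map_smul]
        congr 1
        rw [hsmul, mul_comm]
      let φ := Submodule.mapQ Qs Q Nstar.mkQ hcond
      have hφsurj : LinearMap.range φ = ⊤ := by
        rw [LinearMap.range_eq_top]
        intro x
        obtain ⟨x', rfl⟩ := Submodule.mkQ_surjective Q x
        obtain ⟨m', rfl⟩ := Submodule.mkQ_surjective Nstar x'
        exact ⟨Qs.mkQ m', rfl⟩
      exact isNoetherian_of_surjective φ hφsurj
  -- conclude : contradiction with hJ₀N
  apply hJ₀N
  obtain ⟨u, hu⟩ := hfinM.fg_top
  let φ : R →ₗ[R] ({x // x ∈ u} → M'') :=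
    LinearMap.pi (fun i => LinearMap.toSpanSingleton R M'' i.1)
  have hkerφ : ∀ r ∈ LinearMap.ker φ, ∀ m : S', r • m = 0 := by
    intro r hr m
    have hgens : ∀ x ∈ u, r • x = (0 : M'') := by
      intro x hx
      have := congrFun (LinearMap.mem_ker.mp hr) ⟨x, hx⟩
      simpa [φ, LinearMap.toSpanSingleton_apply] using this
    have hallM : ∀ m'' : M'', r • m'' = 0 := by
      intro m''
      have hsub : Submodule.span R (u : Set M'') ≤
          Submodule.comap ((LinearMap.lsmul R M'') r) ⊥ := by
        rw [Submodule.span_le]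
        intro x hx
        simpa using hgens x hx
      rw [hu] at hsub
      simpa using hsub (Submodule.mem_top : m'' ∈ ⊤)
    have hrN : ∀ m' : S', r • m' ∈ Nstar := by
      intro m'
      have h5 := hallM (Nstar.mkQ m')
      rw [← map_smul, Submodule.mkQ_apply, Submodule.Quotient.mk_eq_zero] at h5
      exact h5
    have hg0 : g r = 0 := hNmax.1 r hrN
    rw [hsmul, hg0, zero_mul]
  have hqnoeth : IsNoetherian R (R ⧸ (LinearMap.ker φ : Ideal R)) := by
    have : IsNoetherian R ({x // x ∈ u} → M'') := inferInstance
    exact isNoetherian_of_linearEquiv (φ.quotKerEquivRange).symm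
  exact aux_L2 (LinearMap.ker φ) hqnoeth hfin'.fg_top hkerφ


theorem aux_prod_noetherian {A B : Type*} [CommRing A] [CommRing B]
    (hA : IsNoetherianRing A) (hB : IsNoetherianRing B) : IsNoetherianRing (A × B) := by
  classical
  rw [isNoetherianRing_iff_ideal_fg] at *
  intro I
  obtain ⟨s₁, h₁⟩ := hA (I.map (RingHom.fst A B))
  obtain ⟨s₂, h₂⟩ := hB (I.map (RingHom.snd A B))
  refine ⟨s₁.image (fun a => ((a, 0) : A × B)) ∪ s₂.image (fun b => ((0, b) : A × B)), ?_⟩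
  apply le_antisymm
  · apply Ideal.span_le.mpr
    intro x hx
    simp only [Finset.coe_union, Set.mem_union, Finset.coe_image, Set.mem_image,
      Finset.mem_coe] at hx
    rcases hx with ⟨a, ha, rfl⟩ | ⟨b, hb, rfl⟩
    · have : a ∈ I.map (RingHom.fst A B) := by
        rw [← h₁]; exact Submodule.subset_span ha
      obtain ⟨x, hxI, rfl⟩ := (Ideal.mem_map_iff_of_surjective _ Prod.fst_surjective).mp this
      have h3 : ((1, 0) : A × B) * x ∈ I := I.mul_mem_left _ hxI
      have h4 : ((1, 0) : A × B) * x = (x.1, 0) := by simp [Prod.ext_iff]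
      rwa [h4] at h3
    · have : b ∈ I.map (RingHom.snd A B) := by
        rw [← h₂]; exact Submodule.subset_span hb
      obtain ⟨x, hxI, rfl⟩ := (Ideal.mem_map_iff_of_surjective _ Prod.snd_surjective).mp this
      have h3 : ((0, 1) : A × B) * x ∈ I := I.mul_mem_left _ hxI
      have h4 : ((0, 1) : A × B) * x = (0, x.2) := by simp [Prod.ext_iff]
      rwa [h4] at h3
  · intro x hx
    obtain ⟨a, b⟩ := x
    have hsplit : ((a, b) : A × B) = (a, 0) + (0, b) := by simp
    rw [hsplit]
    have hmem1 : ∀ c ∈ Ideal.span (s₁ : Set A), ((c, 0) : A × B) ∈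
        Ideal.span ((s₁.image (fun a => ((a, 0) : A × B)) ∪
          s₂.image (fun b => ((0, b) : A × B)) : Finset (A × B)) : Set (A × B)) := by
      intro c hc
      induction hc using Submodule.span_induction with
      | mem x hxs =>
        apply Submodule.subset_span
        simp only [Finset.coe_union, Set.mem_union, Finset.coe_image, Set.mem_image,
          Finset.mem_coe]
        exact Or.inl ⟨x, hxs, rfl⟩
      | zero => simp; exact zero_mem _
      | add x y _ _ hx hy => simpa [Prod.mk_add_mk] using add_mem hx hy
      | smul r x _ hx =>
        have := Ideal.mul_mem_left _ ((r, 0) : A × B) hx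
        simpa [smul_eq_mul] using this
    have hmem2 : ∀ c ∈ Ideal.span (s₂ : Set B), ((0, c) : A × B) ∈
        Ideal.span ((s₁.image (fun a => ((a, 0) : A × B)) ∪
          s₂.image (fun b => ((0, b) : A × B)) : Finset (A × B)) : Set (A × B)) := by
      intro c hc
      induction hc using Submodule.span_induction with
      | mem x hxs =>
        apply Submodule.subset_span
        simp only [Finset.coe_union, Set.mem_union, Finset.coe_image, Set.mem_image,
          Finset.mem_coe]
        exact Or.inr ⟨x, hxs, rfl⟩
      | zero => simp; exact zero_mem _
      | add x y _ _ hx hy => simpa [Prod.mk_add_mk] using add_mem hx hy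
      | smul r x _ hx =>
        have := Ideal.mul_mem_left _ ((0, r) : A × B) hx
        simpa [smul_eq_mul] using this
    apply add_mem
    · apply hmem1
      rw [h₁]
      exact Ideal.mem_map_of_mem _ hx
    · apply hmem2
      rw [h₂]
      exact Ideal.mem_map_of_mem _ hx



theorem amalg_finite {A B : Type*} [CommRing A] [CommRing B] (f : A →+* B) (J : Ideal B)
    (hf : ((Ideal.Quotient.mk J).comp f).Finite) :
    Module.Finite ↥(amalgamation f J) (A × B) := by
  classical
  letI := ((Ideal.Quotient.mk J).comp f).toAlgebra
  haveI hfA : Module.Finite A (B ⧸ J) := hf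
  obtain ⟨s, hs⟩ := hfA.fg_top
  choose lift hlift using fun x : B ⧸ J => Ideal.Quotient.mk_surjective (I := J) x
  set R0 := amalgamation f J with hR0
  set gens : Finset (A × B) :=
    insert ((1, 0) : A × B) (insert ((0, 1) : A × B)
      (s.image (fun x => ((0, lift x) : A × B)))) with hgens
  have hsmulc : ∀ (r : ↥R0) (x : A × B), r • x = (r : A × B) * x := fun r x =>
    Algebra.smul_def r x
  have hJmem : ∀ j ∈ J, ((0, j) : A × B) ∈ Submodule.span ↥R0 (gens : Set (A × B)) := by
    intro j hj
    have hr : ((0, j) : A × B) ∈ R0 := ⟨0, j, hj, by simp⟩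
    have h1 : ((0, 1) : A × B) ∈ Submodule.span ↥R0 (gens : Set (A × B)) :=
      Submodule.subset_span (by simp [hgens])
    have := Submodule.smul_mem _ (⟨(0, j), hr⟩ : ↥R0) h1
    rwa [hsmulc, show ((⟨(0, j), hr⟩ : ↥R0) : A × B) * (0, 1) = (0, j) by
      simp [Prod.ext_iff]] at this
  have hAsmul : ∀ a : A, ((a, f a) : A × B) ∈ R0 := fun a => ⟨a, 0, J.zero_mem, by simp⟩
  have hmk : ∀ a : A, (algebraMap A (B ⧸ J)) a = Ideal.Quotient.mk J (f a) := fun a => rfl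
  have main : ∀ x : B ⧸ J, ∀ b : B, Ideal.Quotient.mk J b = x →
      ((0, b) : A × B) ∈ Submodule.span ↥R0 (gens : Set (A × B)) := by
    intro x
    have hx : x ∈ Submodule.span A (s : Set (B ⧸ J)) := by rw [hs]; trivial
    induction hx using Submodule.span_induction with
    | mem y hy =>
      intro b hb
      have hsub : b - lift y ∈ J := by
        rw [← Ideal.Quotient.eq_zero_iff_mem, map_sub, hb, hlift, sub_self]
      have h1 : ((0, lift y) : A × B) ∈ Submodule.span ↥R0 (gens : Set (A × B)) :=
        Submodule.subset_span (by
          simp only [hgens, Finset.coe_insert, Set.mem_insert_iff, Finset.coe_image,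
            Set.mem_image, Finset.mem_coe]
          exact Or.inr (Or.inr ⟨y, hy, rfl⟩))
      have h2 := add_mem h1 (hJmem _ hsub)
      rwa [show ((0, lift y) : A × B) + (0, b - lift y) = (0, b) by
        simp [Prod.ext_iff]] at h2
    | zero =>
      intro b hb
      exact hJmem b (Ideal.Quotient.eq_zero_iff_mem.mp hb)
    | add y z hy hz ihy ihz =>
      intro b hb
      obtain ⟨by', hby⟩ := Ideal.Quotient.mk_surjective (I := J) y
      have hbz : Ideal.Quotient.mk J (b - by') = z := by
        rw [map_sub, hb, hby]; ring
      have h2 := add_mem (ihy by' hby) (ihz _ hbz)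
      rwa [show ((0, by') : A × B) + (0, b - by') = (0, b) by simp [Prod.ext_iff]] at h2
    | smul a y hy ihy =>
      intro b hb
      obtain ⟨by', hby⟩ := Ideal.Quotient.mk_surjective (I := J) y
      have hbz : b - f a * by' ∈ J := by
        rw [← Ideal.Quotient.eq_zero_iff_mem, map_sub, hb, Algebra.smul_def, hmk, ← hby,
          map_mul, sub_self]
      have h1 := Submodule.smul_mem _ (⟨(a, f a), hAsmul a⟩ : ↥R0) (ihy by' hby)
      rw [hsmulc, show ((⟨(a, f a), hAsmul a⟩ : ↥R0) : A × B) * (0, by') = (0, f a * by') by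
        simp [Prod.ext_iff]] at h1
      have h2 := add_mem h1 (hJmem _ hbz)
      rwa [show ((0, f a * by') : A × B) + (0, b - f a * by') = (0, b) by
        simp [Prod.ext_iff]] at h2
  refine ⟨⟨gens, ?_⟩⟩
  rw [eq_top_iff]
  rintro ⟨a, b⟩ -
  have h1 : ((1, 0) : A × B) ∈ Submodule.span ↥R0 (gens : Set (A × B)) :=
    Submodule.subset_span (by simp [hgens])
  have ha := Submodule.smul_mem _ (⟨(a, f a), hAsmul a⟩ : ↥R0) h1
  rw [hsmulc, show ((⟨(a, f a), hAsmul a⟩ : ↥R0) : A × B) * (1, 0) = (a, 0) by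
    simp [Prod.ext_iff]] at ha
  have hb := main (Ideal.Quotient.mk J b) b rfl
  have h2 := add_mem ha hb
  rwa [show ((a, 0) : A × B) + (0, b) = (a, b) by simp [Prod.ext_iff]] at h2

theorem statement10 {A B : Type*} [CommRing A] [CommRing B] (f : A →+* B) (J : Ideal B)
    (hB : IsNoetherianRing B) (hf : ((Ideal.Quotient.mk J).comp f).Finite) :
    IsNoetherianRing ↥(amalgamation f J) ↔ IsNoetherianRing A := by
  constructor
  · intro h
    exact isNoetherianRing_of_surjective _ A ((RingHom.fst A B).comp (amalgamation f J).subtype)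
      (fun a => ⟨⟨(a, f a + 0), ⟨a, 0, J.zero_mem, rfl⟩⟩, rfl⟩)
  · intro hA
    haveI := amalg_finite f J hf
    exact aux_eakin (fun x y h => Subtype.ext h) (aux_prod_noetherian hA hB)
end

section
/- Let α : A → C and β : B → C be homomorphisms of commutative rings, let D := α ×_C β be their pullback, and let p_A : D → A be the restriction of the first projection. Then the following are equivalent: (i) p_A is a ring retraction, i.e., there exists a ring homomorphism ι : A → D with p_A ∘ ι = id_A; (ii) there exist a ring homomorphism f : A → B and an ideal J of B such that D = A⋈^f J. -/
/-- The pullback (fiber product) `α ×_C β = {(a, b) ∈ A × B | α a = β b}` of two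
ring homomorphisms `α : A → C` and `β : B → C`, as a subring of `A × B`. -/
def pullbackSubring {A B C : Type*} [CommRing A] [CommRing B] [CommRing C]
    (α : A →+* C) (β : B →+* C) : Subring (A × B) where
  carrier := {x : A × B | α x.1 = β x.2}
  one_mem' := by simp
  zero_mem' := by simp
  mul_mem' := by
    intro x y hx hy
    simp only [Set.mem_setOf_eq, Prod.fst_mul, Prod.snd_mul, map_mul] at *
    rw [hx, hy]
  add_mem' := by
    intro x y hx hy
    simp only [Set.mem_setOf_eq, Prod.fst_add, Prod.snd_add, map_add] at *
    rw [hx, hy]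
  neg_mem' := by
    intro x hx
    simp only [Set.mem_setOf_eq, Prod.fst_neg, Prod.snd_neg, map_neg] at *
    rw [hx]

theorem statement16 {A B C : Type*} [CommRing A] [CommRing B] [CommRing C]
    (α : A →+* C) (β : B →+* C) :
    (∃ ι : A →+* ↥(pullbackSubring α β),
        ((RingHom.fst A B).comp (pullbackSubring α β).subtype).comp ι = RingHom.id A) ↔
      ∃ (f : A →+* B) (J : Ideal B), pullbackSubring α β = amalgamation f J := by
  have hmemP : ∀ x : A × B, x ∈ pullbackSubring α β ↔ α x.1 = β x.2 := fun _ => Iff.rfl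
  have hmemA : ∀ (f : A →+* B) (J : Ideal B) (x : A × B),
      x ∈ amalgamation f J ↔ ∃ a : A, ∃ j ∈ J, x = (a, f a + j) := fun _ _ _ => Iff.rfl
  constructor
  · rintro ⟨ι, hι⟩
    have hfst : ∀ a : A, ((ι a : A × B)).1 = a := fun a => RingHom.congr_fun hι a
    refine ⟨(RingHom.snd A B).comp ((pullbackSubring α β).subtype.comp ι), RingHom.ker β, ?_⟩
    ext x
    rw [hmemP, hmemA]
    constructor
    · intro hx
      have hmem : α ((ι x.1 : A × B)).1 = β ((ι x.1 : A × B)).2 := (ι x.1).2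
      rw [hfst] at hmem
      refine ⟨x.1, x.2 - (ι x.1 : A × B).2, ?_, ?_⟩
      · simp only [RingHom.mem_ker, map_sub, ← hmem, hx, sub_self]
      · simp [Prod.ext_iff]
    · rintro ⟨a, j, hj, rfl⟩
      have hmem : α ((ι a : A × B)).1 = β ((ι a : A × B)).2 := (ι a).2
      rw [hfst] at hmem
      simp only [RingHom.mem_ker] at hj
      simp [map_add, hj, hmem]
  · rintro ⟨f, J, h⟩
    have hmem' : ∀ a : A, (a, f a) ∈ pullbackSubring α β := by
      intro a
      rw [h]
      exact ⟨a, 0, J.zero_mem, by simp⟩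
    refine ⟨RingHom.codRestrict ((RingHom.id A).prod f) (pullbackSubring α β) hmem', ?_⟩
    ext a
    rfl
end
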